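/- Let q ≥ 2 be an integer, v(s) := (1/q − 1/2)((π−s)/π)³ + (1/q)(s−π)/π + 1/2, and w(s) := 2π v(s)^q / (v(s)^q + v(2π−s)^q). Then w vanishes to order q at the endpoint s = 0: the j-th derivative of w at 0 equals 0 for every j with 0 ≤ j ≤ q − 1. (This high-order vanishing of the grading function's derivatives at the endpoints is what makes the trapezoid rule in the graded parameter achieve high-order accuracy, typically order q.) -/

import Mathlib

open Real
open scoped ContDiff

/-- The Kress grading auxiliary function (integer grading parameter `q`):
`v(s) = (1/q − 1/2)((π−s)/π)³ + (1/q)(s−π)/π + 1/2`. -/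
noncomputable def kressV (q : ℕ) (s : ℝ) : ℝ :=
  (1 / (q : ℝ) - 1 / 2) * ((π - s) / π) ^ 3 + (1 / (q : ℝ)) * (s - π) / π + 1 / 2

/-- The Kress corner-grading function `w(s) = 2π v(s)^q / (v(s)^q + v(2π−s)^q)`
with integer exponent `q`. -/
noncomputable def kressW (q : ℕ) (s : ℝ) : ℝ :=
  2 * π * kressV q s ^ q / (kressV q s ^ q + kressV q (2 * π - s) ^ q)

/-- The polynomial factor `u` with `v(s) = s·u(s)`. -/
noncomputable def kressU (q : ℕ) (s : ℝ) : ℝ :=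
  (1 / (q : ℝ) - 1 / 2) * (-3 / π + 3 * s / π ^ 2 - s ^ 2 / π ^ 3) + 1 / ((q : ℝ) * π)

lemma kressV_eq_mul (q : ℕ) (hq : (q : ℝ) ≠ 0) (s : ℝ) : kressV q s = s * kressU q s := by
  unfold kressV kressU
  have hπ : (π : ℝ) ≠ 0 := Real.pi_ne_zero
  field_simp [hq]
  ring

/-- If `h` is smooth on an open set containing `0` and `j < n`, then the `j`-th derivative
of `s ↦ s^n * h s` vanishes at `0`. -/
lemma iteratedDeriv_pow_mul_eq_zero :
    ∀ (j n : ℕ) (h : ℝ → ℝ) (U : Set ℝ), IsOpen U → (0 : ℝ) ∈ U →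
      ContDiffOn ℝ ∞ h U → j < n → iteratedDeriv j (fun s => s ^ n * h s) 0 = 0 := by
  intro j
  induction j with
  | zero =>
    intro n h U _ _ _ hn
    simp only [iteratedDeriv_zero]
    rw [zero_pow (by omega : n ≠ 0), zero_mul]
  | succ j IH =>
    intro n h U hU h0 hh hjn
    obtain ⟨m, rfl⟩ : ∃ m, n = m + 1 := ⟨n - 1, by omega⟩
    rw [iteratedDeriv_succ']
    have hderiv : ContDiffOn ℝ ∞ (deriv h) U :=
      hh.deriv_of_isOpen hU (le_of_eq (by simp))
    have hdiff : ∀ y ∈ U, DifferentiableAt ℝ h y := fun y hy =>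
      (hh.differentiableOn (by simp)).differentiableAt (hU.mem_nhds hy)
    have hev : deriv (fun s => s ^ (m + 1) * h s)
        =ᶠ[nhds (0 : ℝ)] fun s => s ^ m * (((m : ℝ) + 1) * h s + s * deriv h s) := by
      filter_upwards [hU.mem_nhds h0] with y hy
      rw [deriv_fun_mul (differentiableAt_pow _) (hdiff y hy), deriv_pow_field]
      push_cast
      rw [pow_succ]
      ring
    rw [hev.iteratedDeriv_eq j]
    have hg : ContDiffOn ℝ ∞ (fun s => ((m : ℝ) + 1) * h s + s * deriv h s) U :=
      (contDiffOn_const.mul hh).add (contDiffOn_id.mul hderiv)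
    exact IH m _ U hU h0 hg (by omega)

/-- For integer `q ≥ 2`, the Kress grading function `w` vanishes to order `q` at the
endpoint `s = 0`: its `j`-th derivative at `0` vanishes for every `0 ≤ j ≤ q − 1`.
This high-order vanishing is what makes the trapezoid rule in the graded parameter
achieve high-order (typically order `q`) accuracy. -/
theorem kressW_vanishes_to_order (q : ℕ) (hq : 2 ≤ q) :
    ∀ j : ℕ, j ≤ q - 1 → iteratedDeriv j (kressW q) 0 = 0 := by
  have hπ : (π : ℝ) ≠ 0 := Real.pi_ne_zero
  set D : ℝ → ℝ := fun s => kressV q s ^ q + kressV q (2 * π - s) ^ q with hD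
  have hVcd : ContDiff ℝ ∞ (kressV q) := by
    unfold kressV
    fun_prop (disch := intros; positivity)
  have hDcd : ContDiff ℝ ∞ D := by
    have : ContDiff ℝ ∞ (fun s : ℝ => 2 * π - s) := by fun_prop
    exact (hVcd.pow q).add ((hVcd.comp this).pow q)
  have hV0 : kressV q 0 = 0 := by
    unfold kressV
    field_simp
    ring
  have hV2pi : kressV q (2 * π) = 1 := by
    unfold kressV
    field_simp
    ring
  have hD0 : D 0 = 1 := by
    simp only [hD, sub_zero, hV0, hV2pi, one_pow, zero_pow (by omega : q ≠ 0), zero_add]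
  set U : Set ℝ := D ⁻¹' {0}ᶜ with hUdef
  have hUopen : IsOpen U := isOpen_compl_singleton.preimage hDcd.continuous
  have hU0 : (0 : ℝ) ∈ U := by
    simp only [hUdef, Set.mem_preimage, Set.mem_compl_iff, Set.mem_singleton_iff, hD0]
    norm_num
  have hUcd : ContDiff ℝ ∞ (kressU q) := by
    unfold kressU
    fun_prop (disch := intros; positivity)
  have hh : ContDiffOn ℝ ∞ (fun s => 2 * π * kressU q s ^ q / D s) U := by
    refine ContDiffOn.div ?_ hDcd.contDiffOn ?_
    · exact (contDiffOn_const.mul (hUcd.pow q).contDiffOn)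
    · intro x hx
      simpa [hUdef] using hx
  have hW : kressW q = fun s => s ^ q * (2 * π * kressU q s ^ q / D s) := by
    funext s
    simp only [kressW, hD]
    rw [kressV_eq_mul q (Nat.cast_ne_zero.mpr (by omega)) s, mul_pow]
    ring
  intro j hj
  rw [hW]
  exact iteratedDeriv_pow_mul_eq_zero j q _ U hUopen hU0 hh (by omega)
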